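/- Let Y be a finite set. The map δ ↦ d_δ from diversities on Y to distances on the set of nonempty subsets of Y is injective: if δ and δ' are diversities on Y with d_δ(A,B) = d_{δ'}(A,B) for all nonempty A, B ⊆ Y, then δ = δ'. Here d_δ(A,A) = 0 and d_δ(A,B) = max(0, δ(A∪B) − δ(A) − δ(B)) for nonempty A ≠ B. -/
import Mathlib

/-- Monotonicity of a diversity. -/
lemma div_mono {Y : Type*} [DecidableEq Y] (δ : Finset Y → ℝ)
    (hδ1 : ∀ A C B : Finset Y, B.Nonempty → δ (A ∪ C) ≤ δ (A ∪ B) + δ (B ∪ C))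
    (hδ2 : ∀ A : Finset Y, A.card ≤ 1 → δ A = 0) :
    ∀ A B : Finset Y, A ⊆ B → δ A ≤ δ B := by
  have step : ∀ (A : Finset Y) (b : Y), δ A ≤ δ (insert b A) := by
    intro A b
    have h := hδ1 A ∅ {b} (Finset.singleton_nonempty b)
    simp only [Finset.union_empty] at h
    have h2 : δ ({b} : Finset Y) = 0 := hδ2 _ (by simp)
    have : A ∪ {b} = insert b A := by
      ext x; simp [or_comm]
    rw [this, h2] at h
    linarith
  intro A B hAB
  induction B using Finset.strongInduction with
  | _ B ih =>
    rcases eq_or_ne A B with rfl | hne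
    · exact le_refl _
    · obtain ⟨b, hbB, hbA⟩ := Finset.exists_of_ssubset (hAB.ssubset_of_ne hne)
      have hsub : A ⊆ B.erase b := fun x hx =>
        Finset.mem_erase.2 ⟨fun he => hbA (he ▸ hx), hAB hx⟩
      have h1 : δ A ≤ δ (B.erase b) := ih _ (Finset.erase_ssubset hbB) hsub
      have h2 : δ (B.erase b) ≤ δ (insert b (B.erase b)) := step _ b
      rw [Finset.insert_erase hbB] at h2
      linarith

/-- Lemma 6.4: the map `δ ↦ d_δ` from diversities on `Y` to distances on the
nonempty subsets of `Y` is injective. -/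
theorem stmt_14 {Y : Type*} [Fintype Y] [DecidableEq Y] (δ δ' : Finset Y → ℝ)
    (hδ1 : ∀ A C B : Finset Y, B.Nonempty → δ (A ∪ C) ≤ δ (A ∪ B) + δ (B ∪ C))
    (hδ2 : ∀ A : Finset Y, A.card ≤ 1 → δ A = 0)
    (hδ'1 : ∀ A C B : Finset Y, B.Nonempty → δ' (A ∪ C) ≤ δ' (A ∪ B) + δ' (B ∪ C))
    (hδ'2 : ∀ A : Finset Y, A.card ≤ 1 → δ' A = 0)
    (d d' : Finset Y → Finset Y → ℝ)
    (hd : ∀ A B : Finset Y,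
      d A B = if A = B then 0 else max 0 (δ (A ∪ B) - δ A - δ B))
    (hd' : ∀ A B : Finset Y,
      d' A B = if A = B then 0 else max 0 (δ' (A ∪ B) - δ' A - δ' B))
    (h : ∀ A B : Finset Y, A.Nonempty → B.Nonempty → d A B = d' A B) :
    δ = δ' := by
  have mono := div_mono δ hδ1 hδ2
  have mono' := div_mono δ' hδ'1 hδ'2
  have key : ∀ n (A : Finset Y), A.card = n → δ A = δ' A := by
    intro n
    induction n using Nat.strong_induction_on with
    | _ n ih =>
      intro A hcard
      by_cases hle : A.card ≤ 1
      · rw [hδ2 A hle, hδ'2 A hle]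
      · push_neg at hle
        have hAne : A.Nonempty := Finset.card_pos.mp (by omega)
        obtain ⟨a, haA⟩ := hAne
        set B := A.erase a with hB
        have hcardB : B.card = A.card - 1 := Finset.card_erase_of_mem haA
        have hBne : B.Nonempty := Finset.card_pos.1 (by omega)
        have haB : a ∉ B := Finset.notMem_erase a A
        have hne : ({a} : Finset Y) ≠ B := by
          intro he; exact haB (he ▸ Finset.mem_singleton_self a)
        have hunion : ({a} : Finset Y) ∪ B = A := by
          have : ({a} : Finset Y) ∪ B = insert a B := by ext x; simp
          rw [this, hB, Finset.insert_erase haA]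
        have hsub : B ⊆ A := Finset.erase_subset a A
        have hIH : δ B = δ' B := ih (A.card - 1) (by omega) B hcardB
        have hda := hd {a} B
        have hda' := hd' {a} B
        rw [if_neg hne, hunion, hδ2 {a} (le_of_eq (Finset.card_singleton a))] at hda
        rw [if_neg hne, hunion, hδ'2 {a} (le_of_eq (Finset.card_singleton a))] at hda'
        have hm : δ B ≤ δ A := mono B A hsub
        have hm' : δ' B ≤ δ' A := mono' B A hsub
        have e1 : d {a} B = δ A - δ B := by rw [hda]; rw [max_eq_right]; ring_nf; linarith
        have e2 : d' {a} B = δ' A - δ' B := by rw [hda']; rw [max_eq_right]; ring_nf; linarith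
        have := h {a} B (Finset.singleton_nonempty a) hBne
        rw [e1, e2] at this
        linarith
  funext A
  exact key A.card A rfl
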